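/- Let A ⊆ B(H) be an operator algebra with contractive approximate identity and M ⊆ B(H,K) a σ-TRO with M* M A ⊆ A. Let Y = closed span of M A and define the restriction Z = closed span of Y M* M = closed span of M A M* M, and A₀ = closed span of M* M A M* M. Then Z equals the closed span of M A₀, and the closed span of M* M A₀ equals A₀ equals the closed span of A₀ M* M; thus Z is a doubly σ-TRO-A₀-rigged module. -/
import Mathlib


open Filter Topology ContinuousLinearMap

/-- The norm-closed linear span of a set of operators. -/
noncomputable def clspan {H K : Type*} [NormedAddCommGroup H] [InnerProductSpace ℂ H]
    [NormedAddCommGroup K] [InnerProductSpace ℂ K] (S : Set (H →L[ℂ] K)) : Set (H →L[ℂ] K) :=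
  closure ((Submodule.span ℂ S : Submodule ℂ (H →L[ℂ] K)) : Set (H →L[ℂ] K))

/-- A σ-TRO. -/
structure IsSigmaTRO {H K : Type*} [NormedAddCommGroup H] [InnerProductSpace ℂ H]
    [CompleteSpace H] [NormedAddCommGroup K] [InnerProductSpace ℂ K] [CompleteSpace K]
    (M : Set (H →L[ℂ] K)) : Prop where
  isClosed : IsClosed M
  subspace : ∃ M' : Submodule ℂ (H →L[ℂ] K), M = M'
  tro : ∀ x ∈ M, ∀ y ∈ M, ∀ z ∈ M, x ∘L (adjoint y ∘L z) ∈ M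
  left_seq : ∃ m : ℕ → (H →L[ℂ] K), (∀ i, m i ∈ M) ∧
    (∀ n, ‖∑ i ∈ Finset.range n, m i ∘L adjoint (m i)‖ ≤ 1) ∧
    (∀ x ∈ M, Tendsto (fun n => ∑ i ∈ Finset.range n, (m i ∘L adjoint (m i)) ∘L x)
      atTop (𝓝 x))
  right_seq : ∃ m : ℕ → (H →L[ℂ] K), (∀ j, m j ∈ M) ∧
    (∀ t, ‖∑ j ∈ Finset.range t, adjoint (m j) ∘L m j‖ ≤ 1) ∧
    (∀ x ∈ M, Tendsto (fun t => ∑ j ∈ Finset.range t, x ∘L (adjoint (m j) ∘L m j))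
      atTop (𝓝 x))

section helpers

variable {H K H₂ K₂ : Type*} [NormedAddCommGroup H] [InnerProductSpace ℂ H]
  [NormedAddCommGroup K] [InnerProductSpace ℂ K]
  [NormedAddCommGroup H₂] [InnerProductSpace ℂ H₂]
  [NormedAddCommGroup K₂] [InnerProductSpace ℂ K₂]

lemma mem_clspan {S : Set (H →L[ℂ] K)} {x : H →L[ℂ] K} (h : x ∈ S) : x ∈ clspan S :=
  subset_closure (Submodule.subset_span h)

lemma clspan_eq_coe (S : Set (H →L[ℂ] K)) :
    clspan S = ((Submodule.span ℂ S).topologicalClosure : Set (H →L[ℂ] K)) :=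
  ((Submodule.span ℂ S).topologicalClosure_coe).symm

lemma clspan_subset_clspan {S T : Set (H →L[ℂ] K)} (h : S ⊆ clspan T) :
    clspan S ⊆ clspan T := by
  rw [clspan_eq_coe T] at h ⊢
  exact closure_minimal (by exact_mod_cast Submodule.span_le.mpr h)
    (Submodule.isClosed_topologicalClosure _)

lemma clspan_map {f : (H →L[ℂ] K) →L[ℂ] (H₂ →L[ℂ] K₂)} {S : Set (H →L[ℂ] K)}
    {T : Set (H₂ →L[ℂ] K₂)} (h : ∀ s ∈ S, f s ∈ clspan T) :
    ∀ x ∈ clspan S, f x ∈ clspan T := by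
  intro x hx
  have hT : IsClosed (clspan T) := isClosed_closure
  have hpre : IsClosed (f ⁻¹' (clspan T)) := hT.preimage f.continuous
  have hsub : ((Submodule.span ℂ S : Submodule ℂ (H →L[ℂ] K)) : Set (H →L[ℂ] K))
      ⊆ f ⁻¹' (clspan T) := by
    intro y hy
    rw [clspan_eq_coe T]
    have : Submodule.span ℂ S ≤
        ((Submodule.span ℂ T).topologicalClosure).comap (f : (H →L[ℂ] K) →ₗ[ℂ] (H₂ →L[ℂ] K₂)) := by
      refine Submodule.span_le.mpr ?_
      intro s hs
      have := h s hs
      rw [clspan_eq_coe T] at this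
      exact this
    exact this hy
  exact closure_minimal hsub hpre hx

lemma tendsto_mem_clspan {S : Set (H →L[ℂ] K)} {f : ℕ → H →L[ℂ] K} {x : H →L[ℂ] K}
    (hf : ∀ n, f n ∈ clspan S) (hx : Tendsto f atTop (𝓝 x)) : x ∈ clspan S :=
  isClosed_closure.mem_of_tendsto hx (Eventually.of_forall hf)

lemma sum_mem_clspan {S : Set (H →L[ℂ] K)} {f : ℕ → H →L[ℂ] K}
    (hf : ∀ i, f i ∈ clspan S) (n : ℕ) : ∑ i ∈ Finset.range n, f i ∈ clspan S := by
  have h' : ∀ i, f i ∈ (Submodule.span ℂ S).topologicalClosure := by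
    intro i; have := hf i; rwa [clspan_eq_coe] at this
  have : ∑ i ∈ Finset.range n, f i ∈ (Submodule.span ℂ S).topologicalClosure :=
    Submodule.sum_mem _ (fun i _ => h' i)
  rwa [clspan_eq_coe]

lemma clspan_lcomp {S : Set (H →L[ℂ] K)} {T : Set (H →L[ℂ] K₂)} (b : K →L[ℂ] K₂)
    (h : ∀ s ∈ S, b ∘L s ∈ clspan T) : ∀ x ∈ clspan S, b ∘L x ∈ clspan T := by
  intro x hx
  have := clspan_map (f := compL ℂ H K K₂ b) (S := S) (T := T)
    (fun s hs => by simpa using h s hs) x hx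
  simpa using this

lemma clspan_rcomp {S : Set (H →L[ℂ] K)} {T : Set (H₂ →L[ℂ] K)} (b : H₂ →L[ℂ] H)
    (h : ∀ s ∈ S, s ∘L b ∈ clspan T) : ∀ x ∈ clspan S, x ∘L b ∈ clspan T := by
  intro x hx
  have := clspan_map (f := (compL ℂ H₂ H K).flip b) (S := S) (T := T)
    (fun s hs => by simpa using h s hs) x hx
  simpa using this

end helpers

/-- With `A` an approximately unital operator algebra, `M` a σ-TRO such that
`M* M A ⊆ A`, `Y = clspan (M A)`, `Z = clspan (Y M* M)` the restriction of `Y`, and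
`A₀ = clspan (M* M A M* M)`, one has `Z = clspan (M A M* M) = clspan (M A₀)` and
`clspan (M* M A₀) = A₀ = clspan (A₀ M* M)`; i.e. `Z` is a doubly σ-TRO-`A₀`-rigged module. -/
theorem stmt_4 {H K : Type*} [NormedAddCommGroup H] [InnerProductSpace ℂ H] [CompleteSpace H]
    [NormedAddCommGroup K] [InnerProductSpace ℂ K] [CompleteSpace K]
    (A : Submodule ℂ (H →L[ℂ] H)) (M : Set (H →L[ℂ] K))
    (hAc : IsClosed (A : Set (H →L[ℂ] H))) (hAm : ∀ x ∈ A, ∀ y ∈ A, x ∘L y ∈ A)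
    {ι : Type*} [Preorder ι] [IsDirected ι (· ≤ ·)] [Nonempty ι]
    (e : ι → (H →L[ℂ] H)) (he : ∀ i, e i ∈ A) (hen : ∀ i, ‖e i‖ ≤ 1)
    (heL : ∀ x ∈ A, Tendsto (fun i => e i ∘L x) atTop (𝓝 x))
    (heR : ∀ x ∈ A, Tendsto (fun i => x ∘L e i) atTop (𝓝 x))
    (hM : IsSigmaTRO M)
    (hMMA : ∀ x ∈ M, ∀ y ∈ M, ∀ a ∈ A, adjoint x ∘L (y ∘L a) ∈ A)
    (Y Z : Set (H →L[ℂ] K)) (A₀ : Set (H →L[ℂ] H))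
    (hY : Y = clspan {x : H →L[ℂ] K | ∃ m ∈ M, ∃ a ∈ A, x = m ∘L a})
    (hZ : Z = clspan {x : H →L[ℂ] K | ∃ y ∈ Y, ∃ m ∈ M, ∃ n ∈ M, x = y ∘L (adjoint m ∘L n)})
    (hA₀ : A₀ = clspan {x : H →L[ℂ] H |
      ∃ m ∈ M, ∃ n ∈ M, ∃ a ∈ A, ∃ p ∈ M, ∃ q ∈ M,
        x = adjoint m ∘L (n ∘L (a ∘L (adjoint p ∘L q)))}) :
    Z = clspan {x : H →L[ℂ] K | ∃ m ∈ M, ∃ a ∈ A, ∃ p ∈ M, ∃ q ∈ M,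
        x = m ∘L (a ∘L (adjoint p ∘L q))} ∧
    Z = clspan {x : H →L[ℂ] K | ∃ m ∈ M, ∃ a ∈ A₀, x = m ∘L a} ∧
    clspan {x : H →L[ℂ] H | ∃ m ∈ M, ∃ n ∈ M, ∃ a ∈ A₀, x = adjoint m ∘L (n ∘L a)} = A₀ ∧
    A₀ = clspan {x : H →L[ℂ] H | ∃ a ∈ A₀, ∃ m ∈ M, ∃ n ∈ M, x = a ∘L (adjoint m ∘L n)} := by

  obtain ⟨mL, hmL, -, hmLlim⟩ := hM.left_seq
  obtain ⟨mR, hmR, -, hmRlim⟩ := hM.right_seq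
  have h1 : Z = clspan {x : H →L[ℂ] K | ∃ m ∈ M, ∃ a ∈ A, ∃ p ∈ M, ∃ q ∈ M,
      x = m ∘L (a ∘L (adjoint p ∘L q))} := by
    rw [hZ]
    apply Set.Subset.antisymm
    · apply clspan_subset_clspan
      rintro x ⟨y, hy, m, hm, n, hn, rfl⟩
      rw [hY] at hy
      refine clspan_rcomp (adjoint m ∘L n) ?_ y hy
      rintro s ⟨m', hm', a, ha, rfl⟩
      exact mem_clspan ⟨m', hm', a, ha, m, hm, n, hn, rfl⟩
    · apply clspan_subset_clspan
      rintro x ⟨m, hm, a, ha, p, hp, q, hq, rfl⟩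
      refine mem_clspan ⟨m ∘L a, ?_, p, hp, q, hq, rfl⟩
      rw [hY]; exact mem_clspan ⟨m, hm, a, ha, rfl⟩
  have h2 : clspan {x : H →L[ℂ] K | ∃ m ∈ M, ∃ a ∈ A, ∃ p ∈ M, ∃ q ∈ M,
      x = m ∘L (a ∘L (adjoint p ∘L q))} =
      clspan {x : H →L[ℂ] K | ∃ m ∈ M, ∃ a ∈ A₀, x = m ∘L a} := by
    apply Set.Subset.antisymm
    · apply clspan_subset_clspan
      rintro x ⟨m, hm, a, ha, p, hp, q, hq, rfl⟩
      have hlim := hmLlim m hm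
      have hphi : Continuous fun y : H →L[ℂ] K => y ∘L (a ∘L (adjoint p ∘L q)) :=
        continuous_id.clm_comp continuous_const
      have hl2 := (hphi.tendsto m).comp hlim
      refine tendsto_mem_clspan ?_ hl2
      intro t
      show (∑ i ∈ Finset.range t, (mL i ∘L adjoint (mL i)) ∘L m) ∘L
        (a ∘L (adjoint p ∘L q)) ∈ _
      rw [finset_sum_comp]
      refine sum_mem_clspan (fun i => ?_) t
      refine mem_clspan ⟨mL i, hmL i,
        adjoint (mL i) ∘L (m ∘L (a ∘L (adjoint p ∘L q))), ?_, rfl⟩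
      rw [hA₀]
      exact mem_clspan ⟨mL i, hmL i, m, hm, a, ha, p, hp, q, hq, rfl⟩
    · apply clspan_subset_clspan
      rintro x ⟨m, hm, a, ha, rfl⟩
      rw [hA₀] at ha
      refine clspan_lcomp m ?_ a ha
      rintro s ⟨m', hm', n, hn, a', ha', p, hp, q, hq, rfl⟩
      exact mem_clspan ⟨m, hm, adjoint m' ∘L (n ∘L a'),
        hMMA m' hm' n hn a' ha', p, hp, q, hq, rfl⟩
  refine ⟨h1, h1.trans h2, ?_, ?_⟩
  · apply Set.Subset.antisymm
    · intro x hx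
      rw [hA₀]
      refine clspan_subset_clspan ?_ hx
      rintro g ⟨m, hm, n, hn, a, ha, rfl⟩
      rw [hA₀] at ha
      refine clspan_lcomp (adjoint m ∘L n) ?_ a ha
      rintro s ⟨p, hp, q, hq, a', ha', p', hp', q', hq', rfl⟩
      exact mem_clspan ⟨m, hm, n ∘L (adjoint p ∘L q), hM.tro n hn p hp q hq,
        a', ha', p', hp', q', hq', rfl⟩
    · intro x hx
      rw [hA₀] at hx
      refine clspan_subset_clspan ?_ hx
      rintro g ⟨m, hm, n, hn, a, ha, p, hp, q, hq, rfl⟩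
      have hlim := hmLlim n hn
      have hphi : Continuous fun y : H →L[ℂ] K =>
          adjoint m ∘L (y ∘L (a ∘L (adjoint p ∘L q))) :=
        continuous_const.clm_comp (continuous_id.clm_comp continuous_const)
      have hl2 := (hphi.tendsto n).comp hlim
      refine tendsto_mem_clspan ?_ hl2
      intro t
      show adjoint m ∘L ((∑ i ∈ Finset.range t, (mL i ∘L adjoint (mL i)) ∘L n) ∘L
        (a ∘L (adjoint p ∘L q))) ∈ _
      rw [finset_sum_comp, comp_finset_sum]
      refine sum_mem_clspan (fun i => ?_) t
      refine mem_clspan ⟨m, hm, mL i, hmL i,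
        adjoint (mL i) ∘L (n ∘L (a ∘L (adjoint p ∘L q))), ?_, rfl⟩
      rw [hA₀]
      exact mem_clspan ⟨mL i, hmL i, n, hn, a, ha, p, hp, q, hq, rfl⟩
  · apply Set.Subset.antisymm
    · intro x hx
      rw [hA₀] at hx
      refine clspan_subset_clspan ?_ hx
      rintro g ⟨m, hm, n, hn, a, ha, p, hp, q, hq, rfl⟩
      have hlim := hmRlim q hq
      have hphi : Continuous fun y : H →L[ℂ] K =>
          (adjoint m ∘L (n ∘L (a ∘L adjoint p))) ∘L y :=
        continuous_const.clm_comp continuous_id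
      have hl2 := (hphi.tendsto q).comp hlim
      refine tendsto_mem_clspan ?_ hl2
      intro t
      show (adjoint m ∘L (n ∘L (a ∘L adjoint p))) ∘L
        (∑ j ∈ Finset.range t, q ∘L (adjoint (mR j) ∘L mR j)) ∈ _
      rw [comp_finset_sum]
      refine sum_mem_clspan (fun j => ?_) t
      refine mem_clspan ⟨adjoint m ∘L (n ∘L (a ∘L (adjoint p ∘L q))), ?_,
        mR j, hmR j, mR j, hmR j, rfl⟩
      rw [hA₀]
      exact mem_clspan ⟨m, hm, n, hn, a, ha, p, hp, q, hq, rfl⟩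
    · intro x hx
      rw [hA₀]
      refine clspan_subset_clspan ?_ hx
      rintro g ⟨a, ha, m, hm, n, hn, rfl⟩
      rw [hA₀] at ha
      refine clspan_rcomp (adjoint m ∘L n) ?_ a ha
      rintro s ⟨p, hp, q, hq, a', ha', p', hp', q', hq', rfl⟩
      exact mem_clspan ⟨p, hp, q, hq, a', ha', p', hp',
        q' ∘L (adjoint m ∘L n), hM.tro q' hq' m hm n hn, rfl⟩
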